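/- For every positive integer r there exist an integer k ≥ 1 and a non-increasing sequence of integers h_1 ≥ h_2 ≥ ⋯ ≥ h_k ≥ 1 such that r = Σ_{i=1}^{k} (2^{h_i} − 1), each value appears at most twice among h_1, …, h_k, and k ≤ 2·⌊log₂(r + 1)⌋. (This decomposition of r into sizes of complete binary trees, with heights non-increasing, is what allows building an AVL tree over r sorted elements in O(r) time by merging the complete binary trees in order of decreasing height.) -/

import Mathlib

lemma count_aux (l : List ℕ) (v : ℕ) :
    (l.map fun x => if x = v then 1 else 0).sum = l.count v := by
  induction l with
  | nil => simp
  | cons a t ih =>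
    simp only [List.map_cons, List.sum_cons, ih, List.count_cons]
    by_cases h : a = v <;> simp [h, Nat.add_comm]

lemma tree_decomp : ∀ r : ℕ, 1 ≤ r → ∃ L : List ℕ, L ≠ [] ∧ L.Pairwise (· ≥ ·) ∧
    (∀ x ∈ L, 1 ≤ x ∧ x ≤ Nat.log 2 (r + 1)) ∧
    r = (L.map fun h => 2 ^ h - 1).sum ∧
    (∀ v, L.count v ≤ 2) ∧ L.length ≤ 2 * Nat.log 2 (r + 1) := by
  intro r
  induction r using Nat.strong_induction_on with
  | _ r ih =>
  intro hr
  set m := Nat.log 2 (r + 1) with hm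
  have hm1 : 1 ≤ m := Nat.log_pos (by norm_num) (by omega)
  have hpow : 2 ^ m ≤ r + 1 := Nat.pow_log_le_self 2 (by omega)
  have hpow2 : r + 1 < 2 ^ (m + 1) := Nat.lt_pow_succ_log_self (by norm_num) _
  set r' := r - (2 ^ m - 1) with hr'
  have h2m : 1 ≤ 2 ^ m := Nat.one_le_two_pow
  have hrr : r = (2 ^ m - 1) + r' := by omega
  have hr'le : r' ≤ 2 ^ m - 1 := by
    have : 2 ^ (m + 1) = 2 * 2 ^ m := by ring
    omega
  rcases Nat.eq_zero_or_pos r' with h0 | hpos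
  · exact ⟨[m], by simp, by simp, by simp [hm1], by simp; omega,
      fun v => le_trans (List.count_le_length (a := v) (l := [m])) (by simp), by simp; omega⟩
  · rcases eq_or_lt_of_le hr'le with heq | hlt
    · -- r = 2*(2^m - 1), take [m, m]
      refine ⟨[m, m], by simp, by simp, by simp [hm1], ?_, ?_, by simp; omega⟩
      · simp; omega
      · intro v
        rcases eq_or_ne v m with hv | hv
        · subst hv; simp
        · simp [List.count_cons, hv.symm]
    · -- recurse on r'
      have hr'r : r' < r := by omega
      obtain ⟨L, hne, hsort, hbound, hsum, hcount, hlen⟩ := ih r' hr'r hpos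
      have hm' : Nat.log 2 (r' + 1) < m := by
        have := Nat.pow_log_le_self 2 (show r' + 1 ≠ 0 by omega)
        by_contra hc
        push_neg at hc
        have : 2 ^ m ≤ 2 ^ Nat.log 2 (r' + 1) := Nat.pow_le_pow_right (by norm_num) hc
        omega
      refine ⟨m :: L, by simp, ?_, ?_, ?_, ?_, ?_⟩
      · refine List.pairwise_cons.mpr ⟨fun b hb => ?_, hsort⟩
        exact le_trans (hbound b hb).2 (le_of_lt hm')
      · rintro x hx
        rcases List.mem_cons.mp hx with rfl | hx
        · exact ⟨hm1, le_refl _⟩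
        · exact ⟨(hbound x hx).1, le_trans (hbound x hx).2 (by omega)⟩
      · simp [← hsum]; omega
      · intro v
        simp only [List.count_cons, beq_iff_eq]
        split
        · next hmv =>
          have hz : L.count v = 0 := List.count_eq_zero.mpr fun hc => by
            have := (hbound v hc).2; omega
          omega
        · have := hcount v; omega
      · simp only [List.length_cons]
        have : Nat.log 2 (r' + 1) ≤ m - 1 := by omega
        calc L.length + 1 ≤ 2 * Nat.log 2 (r' + 1) + 1 := by omega
          _ ≤ 2 * (m - 1) + 1 := by omega
          _ ≤ 2 * m := by omega

theorem complete_binary_tree_decomposition (r : ℕ) (hr : 1 ≤ r) :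
    ∃ (k : ℕ) (h : Fin k → ℕ),
      1 ≤ k ∧
      (∀ i, 1 ≤ h i) ∧
      (∀ i j : Fin k, i ≤ j → h j ≤ h i) ∧
      r = ∑ i, (2 ^ (h i) - 1) ∧
      (∀ v : ℕ, ({i : Fin k | h i = v} : Set (Fin k)).ncard ≤ 2) ∧
      k ≤ 2 * Nat.log 2 (r + 1) := by
  obtain ⟨L, hne, hsort, hbound, hsum, hcount, hlen⟩ := tree_decomp r hr
  refine ⟨L.length, fun i => L.get i, ?_, fun i => (hbound _ (L.get_mem _)).1, ?_, ?_, ?_, hlen⟩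
  · have := List.length_pos_iff.mpr hne; omega
  · intro i j hij
    rcases eq_or_lt_of_le hij with h | h
    · simp [h]
    · exact hsort.rel_get_of_le hij
  · rw [hsum]
    rw [← Fin.sum_univ_fun_getElem L (fun h => 2 ^ h - 1)]
    rfl
  · intro v
    have : ({i : Fin L.length | L.get i = v} : Set (Fin L.length)) =
        ↑(Finset.univ.filter fun i => L.get i = v) := by
      ext i; simp
    rw [this, Set.ncard_coe_finset]
    have hc : (Finset.univ.filter fun i : Fin L.length => L.get i = v).card = L.count v := by
      rw [Finset.card_filter, ← count_aux L v, ← Fin.sum_univ_fun_getElem L (fun x => if x = v then 1 else 0)]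
      rfl
    rw [hc]; exact hcount v
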